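/- Let H be a group and let E be a family of subgroups {α(E) : α ∈ H} of a group G indexed by a group action, totally ordered by inclusion pairwise (for all α, β ∈ H, α(E) ≤ β(E) or β(E) ≤ α(E)), with all indices [α(E) : β(E)] finite when β(E) ≤ α(E). Suppose there exists β* ∈ H with β*(E) > E minimizing [β*(E) : E] among all β with β(E) > E, and suppose for every α with α(E) > E there is some n with β*^n(E) ≤ α(E) (which holds when each index [β(E):E] is finite). Then for every α ∈ H there exists z ∈ ℤ with α(E) = β*^z(E); in particular {α(E) : α ∈ H} = {β*^z(E) : z ∈ ℤ}. -/

import Mathlib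

/-- The translate α(E) of a subgroup E of G under the action of α ∈ H by
automorphisms. -/
def Subgroup.translate {H G : Type*} [Group H] [Group G]
    (φ : H →* MulAut G) (E : Subgroup G) (α : H) : Subgroup G :=
  E.map (φ α).toMonoidHom

section AuxTranslate

variable {H G : Type*} [Group H] [Group G] (φ : H →* MulAut G) (E : Subgroup G)

private lemma translate_one_aux : Subgroup.translate φ E 1 = E := by
  ext x
  simp [Subgroup.translate]

private lemma translate_mul_aux (a b : H) :
    Subgroup.translate φ E (a * b) = (Subgroup.translate φ E b).map (φ a).toMonoidHom := by
  simp [Subgroup.translate, Subgroup.map_map]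
  rfl

private lemma relindex_map_aux (e : G ≃* G) (A B : Subgroup G) :
    (A.map e.toMonoidHom).relIndex (B.map e.toMonoidHom) = A.relIndex B := by
  rw [Subgroup.map_equiv_eq_comap_symm', Subgroup.relIndex_comap]
  congr 1
  simp [Subgroup.map_map]

private lemma map_lt_aux (e : G ≃* G) {A B : Subgroup G} (h : A < B) :
    A.map e.toMonoidHom < B.map e.toMonoidHom := by
  rcases lt_iff_le_and_ne.mp h with ⟨hle, hne⟩
  refine lt_iff_le_and_ne.mpr ⟨(Subgroup.map_le_map_iff_of_injective e.injective).mpr hle, ?_⟩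
  exact fun hc => hne (Subgroup.map_injective e.injective hc)

private lemma arith_mul_lt {a q b : ℕ} (h : a * q = b) (ha : a ≠ 0) (hq : 2 ≤ q) :
    a < b := by
  have := Nat.mul_le_mul_left a hq
  omega

private lemma arith_eq_one {a b q : ℕ} (h : a * b = q) (hq : q ≤ a) (ha : a ≠ 0)
    (hq0 : q ≠ 0) : b = 1 := by
  rcases Nat.lt_or_ge b 2 with hb | hb
  · interval_cases b <;> omega
  · have := Nat.mul_le_mul_left a hb
    omega

end AuxTranslate

open scoped commutatorElement

/-- Let H act on G by automorphisms and let E ≤ G be a subgroup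
whose translates {α(E) : α ∈ H} are pairwise comparable by inclusion, with all
relevant indices finite, and such that the commutators [α, β*ⁿ] fix E. If
β* ∈ H satisfies β*(E) > E and minimizes the index [β*(E) : E] among all
β ∈ H with β(E) > E, and for every α with α(E) > E there is n ∈ ℕ with
β*ⁿ(E) ≤ α(E), then every translate α(E) equals β*^z(E) for some z ∈ ℤ;
in particular {α(E) : α ∈ H} = {β*^z(E) : z ∈ ℤ}. -/
theorem translates_of_eigenfactor_are_powers
    {H G : Type*} [Group H] [Group G]
    (φ : H →* MulAut G) (E : Subgroup G) (β' : H)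
    (hcomp : ∀ α β : H, Subgroup.translate φ E α ≤ Subgroup.translate φ E β ∨
      Subgroup.translate φ E β ≤ Subgroup.translate φ E α)
    (hfin : ∀ α β : H, Subgroup.translate φ E β ≤ Subgroup.translate φ E α →
      (Subgroup.translate φ E β).relIndex (Subgroup.translate φ E α) ≠ 0)
    (hcommfix : ∀ (α : H) (n : ℤ), Subgroup.translate φ E ⁅α, β' ^ n⁆ = E)
    (hβ' : E < Subgroup.translate φ E β')
    (hmin : ∀ β : H, E < Subgroup.translate φ E β →
      E.relIndex (Subgroup.translate φ E β') ≤ E.relIndex (Subgroup.translate φ E β))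
    (harch : ∀ α : H, E < Subgroup.translate φ E α →
      ∃ n : ℕ, Subgroup.translate φ E (β' ^ n) ≤ Subgroup.translate φ E α) :
    (∀ α : H, ∃ z : ℤ, Subgroup.translate φ E α = Subgroup.translate φ E (β' ^ z)) ∧
      Set.range (Subgroup.translate φ E) =
        Set.range (fun z : ℤ => Subgroup.translate φ E (β' ^ z)) := by
  classical
  set T := Subgroup.translate φ E with hTdef
  have hT1 : T 1 = E := translate_one_aux φ E
  have hTmul : ∀ a b : H, T (a * b) = (T b).map (φ a).toMonoidHom :=
    translate_mul_aux φ E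
  -- the chain T (β'^n) is strictly increasing
  have hstep : ∀ n : ℕ, T (β' ^ n) < T (β' ^ (n + 1)) := by
    intro n
    have h1 : T (β' ^ (n + 1)) = (T β').map (φ (β' ^ n)).toMonoidHom := by
      rw [pow_succ, hTmul]
    have h2 : T (β' ^ n) = E.map (φ (β' ^ n)).toMonoidHom := rfl
    rw [h1, h2]
    exact map_lt_aux (φ (β' ^ n)) hβ'
  have hEn : ∀ n : ℕ, E ≤ T (β' ^ n) := by
    intro n
    induction n with
    | zero => rw [pow_zero, hT1]
    | succ n ih => exact ih.trans (hstep n).le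
  -- the basic index q = [β'(E) : E] satisfies 2 ≤ q
  set q := E.relIndex (T β') with hqdef
  have hq0 : q ≠ 0 := by
    have h := hfin β' 1 (by rw [hT1]; exact hβ'.le)
    rwa [hT1] at h
  have hq1 : q ≠ 1 := fun h => absurd (Subgroup.relIndex_eq_one.mp h) (not_le_of_gt hβ')
  have hq2 : 2 ≤ q := by omega
  -- f n = [β'^n(E) : E] is strictly increasing, so n ≤ f n
  set f : ℕ → ℕ := fun n => E.relIndex (T (β' ^ n)) with hfdef
  have hf0 : ∀ n, f n ≠ 0 := by
    intro n
    have h := hfin (β' ^ n) 1 (by rw [hT1]; exact hEn n)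
    rwa [hT1] at h
  have hfmul : ∀ n, f n * q = f (n + 1) := by
    intro n
    have h1 : T (β' ^ (n + 1)) = (T β').map (φ (β' ^ n)).toMonoidHom := by
      rw [pow_succ, hTmul]
    have h2 : T (β' ^ n) = E.map (φ (β' ^ n)).toMonoidHom := rfl
    have hrel : (T (β' ^ n)).relIndex (T (β' ^ (n + 1))) = q := by
      rw [h1, h2, relindex_map_aux]
    rw [← hrel]
    exact Subgroup.relIndex_mul_relIndex E (T (β' ^ n)) (T (β' ^ (n + 1)))
      (hEn n) (hstep n).le
  have hfmono : ∀ n, f n < f (n + 1) := by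
    intro n
    exact arith_mul_lt (hfmul n) (hf0 n) hq2
  have hnlef : ∀ n, n ≤ f n := by
    intro n
    induction n with
    | zero => exact Nat.zero_le _
    | succ n ih => exact Nat.succ_le_of_lt (lt_of_le_of_lt ih (hfmono n))
  -- the key claim for translates strictly above E
  have key : ∀ α : H, E < T α → ∃ n : ℕ, T α = T (β' ^ n) := by
    intro α hlt
    set F := E.relIndex (T α) with hFdef
    have hF0 : F ≠ 0 := by
      have h := hfin α 1 (by rw [hT1]; exact hlt.le)
      rwa [hT1] at h
    have hbound : ∀ n : ℕ, T (β' ^ n) ≤ T α → n ≤ F := by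
      intro n hle
      have hmul := Subgroup.relIndex_mul_relIndex E (T (β' ^ n)) (T α) (hEn n) hle
      have : f n ≤ F := Nat.le_of_dvd (Nat.pos_of_ne_zero hF0) ⟨_, hmul.symm⟩
      exact le_trans (hnlef n) this
    set P : ℕ → Prop := fun n => T (β' ^ n) ≤ T α with hPdef
    have hP0 : P 0 := by
      show T (β' ^ 0) ≤ T α
      rw [pow_zero, hT1]; exact hlt.le
    set N := Nat.findGreatest P F with hNdef
    have hPN : P N := Nat.findGreatest_spec (Nat.zero_le F) hP0
    have hnot : ¬ P (N + 1) := by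
      intro h
      exact Nat.findGreatest_is_greatest (Nat.lt_succ_of_le le_rfl) (hbound _ h) h
    refine ⟨N, ?_⟩
    by_contra hne
    have hstrict : T (β' ^ N) < T α := hPN.lt_of_ne (fun h => hne h.symm)
    set δ := (β' ^ N)⁻¹ * α with hδdef
    have hδeq : T δ = (T α).map (φ ((β' ^ N)⁻¹)).toMonoidHom := hTmul _ _
    have hEeq : E = (T (β' ^ N)).map (φ ((β' ^ N)⁻¹)).toMonoidHom := by
      rw [← hTmul, inv_mul_cancel, hT1]
    have hδE : E < T δ := by
      rw [hδeq]
      nth_rewrite 1 [hEeq]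
      exact map_lt_aux _ hstrict
    have hαδ : β' ^ N * δ = α := by
      rw [hδdef, mul_inv_cancel_left]
    rcases hcomp δ β' with hc | hc
    · -- T δ ≤ T β' : then T δ = T β' by index minimality
      have hmono := hmin δ hδE
      have hmul := Subgroup.relIndex_mul_relIndex E (T δ) (T β') hδE.le hc
      have ha0 : E.relIndex (T δ) ≠ 0 := by
        have h := hfin δ 1 (by rw [hT1]; exact hδE.le)
        rwa [hT1] at h
      have hb1 : (T δ).relIndex (T β') = 1 :=
        arith_eq_one hmul hmono ha0 hq0
      have hδβ : T δ = T β' := le_antisymm hc (Subgroup.relIndex_eq_one.mp hb1)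
      have hfinal : T α = T (β' ^ (N + 1)) := by
        rw [← hαδ, hTmul, hδβ, ← hTmul, ← pow_succ]
      exact hnot (le_of_eq hfinal.symm)
    · -- T β' ≤ T δ : then β'^(N+1)(E) ≤ α(E), contradicting maximality
      have hfinal : T (β' ^ (N + 1)) ≤ T α :=
        calc T (β' ^ (N + 1)) = (T β').map (φ (β' ^ N)).toMonoidHom := by
              rw [pow_succ, hTmul]
          _ ≤ (T δ).map (φ (β' ^ N)).toMonoidHom := Subgroup.map_mono hc
          _ = T (β' ^ N * δ) := (hTmul _ _).symm
          _ = T α := by rw [hαδ]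
      exact hnot hfinal
  -- the main statement
  have main : ∀ α : H, ∃ z : ℤ, T α = T (β' ^ z) := by
    intro α
    rcases eq_or_ne (T α) E with hEq | hne
    · exact ⟨0, by rw [hEq, zpow_zero, hT1]⟩
    rcases hcomp α 1 with hc | hc
    · -- T α < E : pass to α⁻¹
      rw [hT1] at hc
      have hinv : E < T α⁻¹ := by
        have h1 : T α⁻¹ = E.map (φ α⁻¹).toMonoidHom := rfl
        have h2 : E = (T α).map (φ α⁻¹).toMonoidHom := by
          rw [← hTmul, inv_mul_cancel, hT1]
        rw [h1]
        nth_rewrite 1 [h2]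
        exact map_lt_aux _ (hc.lt_of_ne hne)
      obtain ⟨n, hn⟩ := key α⁻¹ hinv
      refine ⟨-(n : ℤ), ?_⟩
      have h1 : T (α * β' ^ n) = E := by
        rw [hTmul, ← hn, ← hTmul, mul_inv_cancel, hT1]
      have h2 : T (β' ^ (-(n : ℤ)) * α * β' ^ (n : ℤ)) = T α := by
        have hgrp : α * ⁅α⁻¹, β' ^ (-(n : ℤ))⁆ = β' ^ (-(n : ℤ)) * α * β' ^ (n : ℤ) := by
          rw [commutatorElement_def]
          group
        rw [← hgrp, hTmul, hcommfix α⁻¹ (-(n : ℤ))]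
        rfl
      have h3 : T (β' ^ (-(n : ℤ)) * α * β' ^ (n : ℤ)) = T (β' ^ (-(n : ℤ))) := by
        rw [mul_assoc, hTmul]
        have hz : α * β' ^ (n : ℤ) = α * β' ^ n := by rw [zpow_natCast]
        rw [hz, h1]
        rfl
      exact h2.symm.trans h3
    · -- E < T α : use the key claim directly
      rw [hT1] at hc
      obtain ⟨n, hn⟩ := key α (hc.lt_of_ne (Ne.symm hne))
      exact ⟨(n : ℤ), by rw [hn, zpow_natCast]⟩
  refine ⟨main, ?_⟩
  ext K
  simp only [Set.mem_range]
  constructor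
  · rintro ⟨α, rfl⟩
    obtain ⟨z, hz⟩ := main α
    exact ⟨z, hz.symm⟩
  · rintro ⟨z, rfl⟩
    exact ⟨β' ^ z, rfl⟩
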